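/- Let X : G → ℝ be a function on an open set G ⊆ ℝ^{n+1}, let Z ⊆ ℝⁿ be closed, and suppose that for every multi-index α with |α| ≤ r, the derivative ∂^α X exists on G ∖ (ℝ × Z) and satisfies |∂^α X(ξ,x)| ≤ A·dist(x,Z)^{r+1−|α|} there, and X = 0 on G ∩ (ℝ × Z). Then all partial derivatives of X of order ≤ r exist and vanish on G ∩ (ℝ × Z), and X is of class C^r on G. -/

import Mathlib

/-- The standard basis of `ℝ × ℝⁿ` as directions for partial derivatives in `(ξ, x₁, …, xₙ)`. -/
noncomputable def basisP (n : ℕ) : Fin (n + 1) → ℝ × (Fin n → ℝ) :=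
  Fin.cases (1, 0) (fun i => (0, Pi.single i 1))

/-- Directional (partial) derivative of `h : ℝ × ℝⁿ → ℝ` in the direction `v`. -/
noncomputable def pdP {n : ℕ} (v : ℝ × (Fin n → ℝ))
    (h : ℝ × (Fin n → ℝ) → ℝ) : ℝ × (Fin n → ℝ) → ℝ :=
  fun p => fderiv ℝ h p v

/-- The partial derivative `∂^α` in `(ξ, x₁, …, xₙ)` for a multi-index `α : ℕ₀^{n+1}`. -/
noncomputable def mpdP {n : ℕ} (α : Fin (n + 1) → ℕ)
    (h : ℝ × (Fin n → ℝ) → ℝ) : ℝ × (Fin n → ℝ) → ℝ :=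
  (List.finRange (n + 1)).foldr (fun i k => (pdP (basisP n i))^[α i] k) h

namespace Stmt10Aux

variable {n : ℕ}

/-- iterated directional derivatives along a list of directions -/
noncomputable def pdList (l : List (Fin (n + 1))) (h : ℝ × (Fin n → ℝ) → ℝ) :
    ℝ × (Fin n → ℝ) → ℝ :=
  l.foldr (fun i k => pdP (basisP n i) k) h

@[simp] lemma pdList_nil (h : ℝ × (Fin n → ℝ) → ℝ) : pdList [] h = h := rfl

@[simp] lemma pdList_cons (a : Fin (n + 1)) (l : List (Fin (n + 1)))
    (h : ℝ × (Fin n → ℝ) → ℝ) : pdList (a :: l) h = pdP (basisP n a) (pdList l h) := rfl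

lemma pdList_append (l₁ l₂ : List (Fin (n + 1))) (h : ℝ × (Fin n → ℝ) → ℝ) :
    pdList (l₁ ++ l₂) h = pdList l₁ (pdList l₂ h) := by
  simp [pdList, List.foldr_append]

lemma iterate_pdP (i : Fin (n + 1)) (m : ℕ) (h : ℝ × (Fin n → ℝ) → ℝ) :
    (pdP (basisP n i))^[m] h = pdList (List.replicate m i) h := by
  induction m with
  | zero => rfl
  | succ m ih => rw [Function.iterate_succ_apply', ih]; rfl

/-- the canonical list attached to a multi-index -/
def Lst (α : Fin (n + 1) → ℕ) : List (Fin (n + 1)) :=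
  (List.finRange (n + 1)).flatMap (fun i => List.replicate (α i) i)

lemma mpdP_eq_pdList (α : Fin (n + 1) → ℕ) (h : ℝ × (Fin n → ℝ) → ℝ) :
    mpdP α h = pdList (Lst α) h := by
  unfold mpdP Lst
  induction (List.finRange (n + 1)) with
  | nil => rfl
  | cons a l ih =>
      rw [List.flatMap_cons, pdList_append, ← ih]
      exact iterate_pdP _ _ _

lemma count_Lst (α : Fin (n + 1) → ℕ) (j : Fin (n + 1)) : (Lst α).count j = α j := by
  have key : ∀ l : List (Fin (n + 1)), l.Nodup →
      (l.flatMap (fun i => List.replicate (α i) i)).count j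
        = if j ∈ l then α j else 0 := by
    intro l hl
    induction l with
    | nil => simp
    | cons a l ih =>
        have hal : a ∉ l := (List.nodup_cons.mp hl).1
        rw [List.flatMap_cons, List.count_append, List.count_replicate,
          ih (List.nodup_cons.mp hl).2]
        rcases eq_or_ne j a with rfl | hne
        · simp [hal]
        · simp [hne, hne.symm, List.mem_cons]
  rw [Lst, key _ (List.nodup_finRange _), if_pos (List.mem_finRange j)]

lemma length_Lst (α : Fin (n + 1) → ℕ) : (Lst α).length = ∑ i, α i := by
  rw [Lst, List.length_flatMap, Fin.sum_univ_def]
  simp [Function.comp_def]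

lemma sum_count (l : List (Fin (n + 1))) : (∑ j, l.count j) = l.length := by
  induction l with
  | nil => simp
  | cons a l ih =>
      simp only [List.count_cons, Finset.sum_add_distrib, ih, List.length_cons]
      congr 1
      simp

variable {V : Set (ℝ × (Fin n → ℝ))}

lemma pdP_congrOn (hV : IsOpen V) {u v : ℝ × (Fin n → ℝ) → ℝ} (h : Set.EqOn u v V)
    (b : ℝ × (Fin n → ℝ)) : Set.EqOn (pdP b u) (pdP b v) V := fun p hp => by
  unfold pdP
  rw [Filter.EventuallyEq.fderiv_eq (Filter.eventuallyEq_of_mem (hV.mem_nhds hp) h)]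

lemma pdList_congrOn (hV : IsOpen V) {u v : ℝ × (Fin n → ℝ) → ℝ} (h : Set.EqOn u v V)
    (l : List (Fin (n + 1))) : Set.EqOn (pdList l u) (pdList l v) V := by
  induction l with
  | nil => exact h
  | cons a l ih => exact pdP_congrOn hV ih _

lemma pdP_contDiffOn (hV : IsOpen V) {m : ℕ} {u : ℝ × (Fin n → ℝ) → ℝ}
    (hu : ContDiffOn ℝ (m + 1) u V) (b : ℝ × (Fin n → ℝ)) :
    ContDiffOn ℝ m (pdP b u) V :=
  (hu.fderiv_of_isOpen hV (by norm_cast)).clm_apply contDiffOn_const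

lemma pdList_contDiffOn (hV : IsOpen V) {u : ℝ × (Fin n → ℝ) → ℝ}
    (l : List (Fin (n + 1))) {m : ℕ}
    (hu : ContDiffOn ℝ (m + l.length : ℕ) u V) :
    ContDiffOn ℝ m (pdList l u) V := by
  induction l generalizing m with
  | nil => simpa using hu
  | cons a l ih =>
      refine pdP_contDiffOn hV (ih (m := m + 1) ?_) _
      rwa [show m + 1 + l.length = m + (a :: l).length by simp only [List.length_cons]; omega]

lemma pdP_swap (hV : IsOpen V) {u : ℝ × (Fin n → ℝ) → ℝ}
    (hu : ContDiffOn ℝ 2 u V) (b c : ℝ × (Fin n → ℝ)) :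
    Set.EqOn (pdP b (pdP c u)) (pdP c (pdP b u)) V := by
  have key : ∀ p ∈ V, ∀ b c, pdP b (pdP c u) p = fderiv ℝ (fderiv ℝ u) p b c := by
    intro p hp b c
    have hd1 : ContDiffOn ℝ 1 (fderiv ℝ u) V :=
      hu.fderiv_of_isOpen hV (by norm_num)
    have hdd : DifferentiableAt ℝ (fderiv ℝ u) p :=
      (hd1.differentiableOn one_ne_zero p hp).differentiableAt (hV.mem_nhds hp)
    have heq : pdP c u = fun q => ContinuousLinearMap.apply ℝ ℝ c (fderiv ℝ u q) := rfl
    show fderiv ℝ (pdP c u) p b = _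
    rw [heq, show (fun q => ContinuousLinearMap.apply ℝ ℝ c (fderiv ℝ u q))
        = (ContinuousLinearMap.apply ℝ ℝ c) ∘ (fderiv ℝ u) from rfl,
      fderiv_comp p (ContinuousLinearMap.apply ℝ ℝ c).differentiableAt hdd,
      ContinuousLinearMap.fderiv]
    rfl
  intro p hp
  rw [key p hp b c, key p hp c b]
  have hdiff : ∀ᶠ y in nhds p, HasFDerivAt u (fderiv ℝ u y) y := by
    filter_upwards [hV.mem_nhds hp] with y hy
    exact ((hu.differentiableOn (by norm_num) y hy).differentiableAt
      (hV.mem_nhds hy)).hasFDerivAt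
  have hd1 : ContDiffOn ℝ 1 (fderiv ℝ u) V := hu.fderiv_of_isOpen hV (by norm_num)
  have hdd : HasFDerivAt (fderiv ℝ u) (fderiv ℝ (fderiv ℝ u) p) p :=
    ((hd1.differentiableOn one_ne_zero p hp).differentiableAt (hV.mem_nhds hp)).hasFDerivAt
  exact second_derivative_symmetric_of_eventually hdiff hdd b c

lemma pdList_perm (hV : IsOpen V) {u : ℝ × (Fin n → ℝ) → ℝ}
    {l l' : List (Fin (n + 1))} (hperm : l.Perm l')
    (hu : ContDiffOn ℝ (l.length : ℕ) u V) :
    Set.EqOn (pdList l u) (pdList l' u) V := by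
  induction hperm generalizing u with
  | nil => exact fun p _ => rfl
  | cons a h ih =>
      exact pdP_congrOn hV (ih (hu.of_le (by exact_mod_cast Nat.le_succ _))) _
  | swap a b l =>
      have h2 : ContDiffOn ℝ 2 (pdList l u) V := by
        refine pdList_contDiffOn hV l (m := 2) ?_
        rwa [show 2 + l.length = (b :: a :: l).length by simp only [List.length_cons]; omega]
      intro p hp
      simpa using pdP_swap hV h2 (basisP n b) (basisP n a) hp
  | trans h₁ h₂ ih₁ ih₂ =>
      refine (ih₁ hu).trans (ih₂ ?_)
      rwa [← h₁.length_eq]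

end Stmt10Aux

open Stmt10Aux in
lemma stmt10_aux {n : ℕ} (G : Set (ℝ × (Fin n → ℝ))) (hG : IsOpen G)
    (Z : Set (Fin n → ℝ)) (hZ : IsClosed Z) (A : ℝ) (hA : 0 < A) :
    ∀ (r : ℕ) (X : ℝ × (Fin n → ℝ) → ℝ),
      ContDiffOn ℝ r X (G \ (Set.univ ×ˢ Z)) →
      (∀ l : List (Fin (n + 1)), l.length ≤ r → ∀ p ∈ G \ (Set.univ ×ˢ Z),
          |pdList l X p| ≤ A * Metric.infDist p.2 Z ^ (r + 1 - l.length)) →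
      (∀ p ∈ G ∩ (Set.univ ×ˢ Z), X p = 0) →
      (∀ l : List (Fin (n + 1)), l.length ≤ r →
          ∀ p ∈ G ∩ (Set.univ ×ˢ Z), pdList l X p = 0) ∧
        ContDiffOn ℝ r X G := by
  have hVo : IsOpen (G \ (Set.univ ×ˢ Z)) := hG.sdiff (isClosed_univ.prod hZ)
  intro r
  induction r with
  | zero =>
      intro X hsmooth hbound hzero
      constructor
      · intro l hl p hp
        rw [List.length_eq_zero_iff.mp (Nat.le_zero.mp hl)]
        exact hzero p hp
      · rw [show ((0 : ℕ) : WithTop ℕ∞) = 0 from rfl, contDiffOn_zero]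
        intro p hp
        by_cases hpz : p ∈ Set.univ ×ˢ Z
        · refine ContinuousAt.continuousWithinAt ?_
          have hXp : X p = 0 := hzero p ⟨hp, hpz⟩
          rw [ContinuousAt, hXp]
          refine squeeze_zero_norm'
            (a := fun q : ℝ × (Fin n → ℝ) => A * Metric.infDist q.2 Z ^ 1) ?_ ?_
          · filter_upwards [hG.mem_nhds hp] with q hq
            by_cases hqz : q ∈ Set.univ ×ˢ Z
            · rw [hzero q ⟨hq, hqz⟩]
              simp only [norm_zero]
              exact mul_nonneg hA.le (pow_nonneg Metric.infDist_nonneg 1)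
            · have := hbound [] (by simp) q ⟨hq, hqz⟩
              simpa [Real.norm_eq_abs] using this
          · have hc : Continuous (fun q : ℝ × (Fin n → ℝ) =>
                A * Metric.infDist q.2 Z ^ 1) := by
              exact (((Metric.continuous_infDist_pt Z).comp continuous_snd).pow 1).const_smul A
            have := hc.tendsto p
            rw [Metric.infDist_zero_of_mem hpz.2] at this
            simpa using this
        · exact (hsmooth.continuousOn.continuousAt
            (hVo.mem_nhds ⟨hp, hpz⟩)).continuousWithinAt
  | succ k IH =>
      intro X hsmooth hbound hzero
      have hXbound : ∀ q ∈ G, |X q| ≤ A * Metric.infDist q.2 Z ^ (k + 2) := by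
        intro q hq
        by_cases hqz : q ∈ Set.univ ×ˢ Z
        · rw [hzero q ⟨hq, hqz⟩, abs_zero]
          exact mul_nonneg hA.le (pow_nonneg Metric.infDist_nonneg _)
        · have := hbound [] (by simp) q ⟨hq, hqz⟩
          simpa using this
      have hderiv0 : ∀ p ∈ G ∩ Set.univ ×ˢ Z,
          HasFDerivAt X (0 : (ℝ × (Fin n → ℝ)) →L[ℝ] ℝ) p := by
        intro p hp
        rw [hasFDerivAt_iff_isLittleO_nhds_zero, Asymptotics.isLittleO_iff]
        intro c hc
        have hXp : X p = 0 := hzero p hp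
        set ε := min (c / A) 1 with hεdef
        have hεpos : 0 < ε := lt_min (div_pos hc hA) one_pos
        have hmem : ∀ᶠ h : ℝ × (Fin n → ℝ) in nhds 0, p + h ∈ G ∧ ‖h‖ < ε := by
          have h1 : Filter.Tendsto (fun h : ℝ × (Fin n → ℝ) => p + h) (nhds 0) (nhds p) := by
            simpa using (continuous_add_left p).tendsto (0 : ℝ × (Fin n → ℝ))
          filter_upwards [h1.eventually_mem (hG.mem_nhds hp.1),
            Metric.ball_mem_nhds (0 : ℝ × (Fin n → ℝ)) hεpos] with h h1' h2'
          exact ⟨h1', by simpa [dist_eq_norm] using h2'⟩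
        filter_upwards [hmem] with h hh
        have hd : Metric.infDist (p + h).2 Z ≤ ‖h‖ := by
          refine le_trans (Metric.infDist_le_dist_of_mem hp.2.2) ?_
          calc dist (p + h).2 p.2 = ‖h.2‖ := by
                simp [dist_eq_norm, Prod.snd_add]
            _ ≤ ‖h‖ := norm_snd_le h
        have hd0 : (0:ℝ) ≤ Metric.infDist (p + h).2 Z := Metric.infDist_nonneg
        have h1 : |X (p + h)| ≤ A * Metric.infDist (p + h).2 Z ^ (k + 2) := hXbound _ hh.1
        have h2 : Metric.infDist (p + h).2 Z ^ (k + 2) ≤ ε ^ (k + 1) * ‖h‖ := by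
          calc Metric.infDist (p + h).2 Z ^ (k + 2)
              = Metric.infDist (p + h).2 Z ^ (k + 1) * Metric.infDist (p + h).2 Z := by ring
            _ ≤ ε ^ (k + 1) * ‖h‖ :=
              mul_le_mul (pow_le_pow_left₀ hd0 (le_trans hd hh.2.le) _) hd hd0
                (pow_nonneg hεpos.le _)
        have h3 : A * ε ^ (k + 1) ≤ c := by
          have hε1 : ε ≤ 1 := min_le_right _ _
          have hεc : ε ≤ c / A := min_le_left _ _
          have h4 : ε ^ (k + 1) ≤ ε ^ 1 :=
            pow_le_pow_of_le_one hεpos.le hε1 (Nat.one_le_iff_ne_zero.mpr (Nat.succ_ne_zero k))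
          rw [pow_one] at h4
          calc A * ε ^ (k + 1) ≤ A * ε := by nlinarith
            _ ≤ A * (c / A) := by nlinarith
            _ = c := by field_simp
        calc ‖X (p + h) - X p - (0 : (ℝ × (Fin n → ℝ)) →L[ℝ] ℝ) h‖
            = |X (p + h)| := by simp [hXp, Real.norm_eq_abs]
          _ ≤ A * (ε ^ (k + 1) * ‖h‖) :=
              le_trans h1 (mul_le_mul_of_nonneg_left h2 hA.le)
          _ = (A * ε ^ (k + 1)) * ‖h‖ := by ring
          _ ≤ c * ‖h‖ := mul_le_mul_of_nonneg_right h3 (norm_nonneg _)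
      have hone : (1 : WithTop ℕ∞) ≤ ((k + 1 : ℕ) : WithTop ℕ∞) := by
        exact_mod_cast Nat.succ_le_succ (Nat.zero_le k)
      have hdiffat : ∀ p ∈ G, DifferentiableAt ℝ X p := by
        intro p hp
        by_cases hpz : p ∈ Set.univ ×ˢ Z
        · exact (hderiv0 p ⟨hp, hpz⟩).differentiableAt
        · exact ((hsmooth.differentiableOn (by exact_mod_cast Nat.succ_ne_zero k)) p ⟨hp, hpz⟩).differentiableAt
            (hVo.mem_nhds ⟨hp, hpz⟩)
      have hfz : ∀ p ∈ G ∩ Set.univ ×ˢ Z, fderiv ℝ X p = 0 :=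
        fun p hp => (hderiv0 p hp).fderiv
      set g : Fin (n + 1) → (ℝ × (Fin n → ℝ)) → ℝ := fun i => pdP (basisP n i) X with hg
      have hgIH : ∀ i, (∀ l : List (Fin (n + 1)), l.length ≤ k →
          ∀ p ∈ G ∩ Set.univ ×ˢ Z, pdList l (g i) p = 0) ∧ ContDiffOn ℝ k (g i) G := by
        intro i
        refine IH (g i) ?_ ?_ ?_
        · refine pdP_contDiffOn hVo (m := k) ?_ _
          exact_mod_cast hsmooth
        · intro l hl p hp
          have heq : pdList l (g i) = pdList (l ++ [i]) X := by rw [pdList_append]; rfl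
          rw [heq]
          have hb := hbound (l ++ [i])
            (by simp only [List.length_append, List.length_cons, List.length_nil]; omega) p hp
          have hexp : k + 1 + 1 - (l ++ [i]).length = k + 1 - l.length := by
            simp only [List.length_append, List.length_cons, List.length_nil]; omega
          rwa [hexp] at hb
        · intro p hp
          show fderiv ℝ X p (basisP n i) = 0
          rw [hfz p hp]
          rfl
      constructor
      · intro l hl p hp
        rcases l.eq_nil_or_concat with rfl | ⟨l', i, rfl⟩
        · exact hzero p hp
        · have heq : pdList (l' ++ [i]) X = pdList l' (g i) := by rw [pdList_append]; rfl
          rw [List.concat_eq_append, heq]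
          refine (hgIH i).1 l' ?_ p hp
          rw [List.concat_eq_append] at hl
          simp only [List.length_append, List.length_cons, List.length_nil] at hl
          omega
      · rw [show ((k + 1 : ℕ) : WithTop ℕ∞) = (k : WithTop ℕ∞) + 1 by push_cast; rfl,
          contDiffOn_succ_iff_fderiv_of_isOpen hG]
        refine ⟨fun p hp => (hdiffat p hp).differentiableWithinAt, ?_, ?_⟩
        · intro hω
          exact absurd hω (by simp)
        · set E : Fin (n + 1) → (ℝ × (Fin n → ℝ)) →L[ℝ] ℝ :=
            Fin.cases (ContinuousLinearMap.fst ℝ ℝ (Fin n → ℝ))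
              (fun j => (ContinuousLinearMap.proj j).comp
                (ContinuousLinearMap.snd ℝ ℝ (Fin n → ℝ))) with hE
          have hsum : ContDiffOn ℝ k (fun p => ∑ i, g i p • E i) G :=
            ContDiffOn.sum (fun i _ => ((hgIH i).2).smul contDiffOn_const)
          refine hsum.congr ?_
          intro p hp
          refine ContinuousLinearMap.ext fun w => ?_
          have hsingle : ∀ (c : ℝ) (j : Fin n),
              c • (Pi.single j (1:ℝ) : Fin n → ℝ) = Pi.single j c := fun c j => by
            rw [← Pi.single_smul]; simp
          have hb0 : basisP n 0 = ((1:ℝ), (0 : Fin n → ℝ)) := rfl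
          have hbs : ∀ j : Fin n, basisP n j.succ = ((0:ℝ), Pi.single j 1) := fun j => by
            simp [basisP]
          have hw : w = w.1 • basisP n 0 + ∑ j, w.2 j • basisP n j.succ := by
            refine Prod.ext ?_ ?_
            · simp [hb0, hbs, Prod.fst_sum]
            · simp only [Prod.snd_add, Prod.smul_snd, hb0, hbs, Prod.snd_sum, smul_zero,
                zero_add]
              rw [Finset.sum_congr rfl (fun j _ => hsingle (w.2 j) j)]
              rw [Finset.univ_sum_single]
          calc fderiv ℝ X p w
              = w.1 * fderiv ℝ X p (basisP n 0)
                + ∑ j, w.2 j * fderiv ℝ X p (basisP n j.succ) := by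
                conv_lhs => rw [hw]
                rw [map_add, map_smul, map_sum]
                simp [smul_eq_mul]
            _ = (∑ i, g i p • E i) w := by
                rw [ContinuousLinearMap.sum_apply]
                simp only [ContinuousLinearMap.smul_apply, smul_eq_mul]
                rw [Fin.sum_univ_succ]
                have hE0 : E 0 w = w.1 := by simp [hE]
                have hEs : ∀ j : Fin n, E j.succ w = w.2 j := fun j => by simp [hE]
                simp only [hE0, hEs, hg, pdP]
                rw [mul_comm]
                congr 1
                exact Finset.sum_congr rfl (fun j _ => mul_comm _ _)

theorem stmt10 {n : ℕ} (r : ℕ) (hr : 1 ≤ r) (G : Set (ℝ × (Fin n → ℝ))) (hG : IsOpen G)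
    (Z : Set (Fin n → ℝ)) (hZ : IsClosed Z) (X : ℝ × (Fin n → ℝ) → ℝ)
    (A : ℝ) (hA : 0 < A)
    (hsmooth : ContDiffOn ℝ r X (G \ (Set.univ ×ˢ Z)))
    (hbound : ∀ α : Fin (n + 1) → ℕ, (∑ i, α i) ≤ r → ∀ p ∈ G \ (Set.univ ×ˢ Z),
      |mpdP α X p| ≤ A * Metric.infDist p.2 Z ^ (r + 1 - ∑ i, α i))
    (hzero : ∀ p ∈ G ∩ (Set.univ ×ˢ Z), X p = 0) :
    (∀ α : Fin (n + 1) → ℕ, (∑ i, α i) ≤ r →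
      ∀ p ∈ G ∩ (Set.univ ×ˢ Z), mpdP α X p = 0) ∧
    ContDiffOn ℝ r X G := by
  have hVo : IsOpen (G \ (Set.univ ×ˢ Z)) := hG.sdiff (isClosed_univ.prod hZ)
  have hbound' : ∀ l : List (Fin (n + 1)), l.length ≤ r → ∀ p ∈ G \ (Set.univ ×ˢ Z),
      |Stmt10Aux.pdList l X p| ≤ A * Metric.infDist p.2 Z ^ (r + 1 - l.length) := by
    intro l hl p hp
    have hperm : (Stmt10Aux.Lst (fun j => l.count j)).Perm l :=
      List.perm_iff_count.mpr (fun j => Stmt10Aux.count_Lst _ j)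
    have hlen : (Stmt10Aux.Lst (fun j => l.count j)).length = l.length := by
      rw [Stmt10Aux.length_Lst, Stmt10Aux.sum_count]
    have hcd : ContDiffOn ℝ ((Stmt10Aux.Lst (fun j => l.count j)).length : ℕ) X
        (G \ (Set.univ ×ˢ Z)) := by
      refine hsmooth.of_le ?_
      rw [hlen]
      exact_mod_cast hl
    have heq := Stmt10Aux.pdList_perm hVo hperm hcd hp
    rw [← heq, ← Stmt10Aux.mpdP_eq_pdList]
    have hb := hbound (fun j => l.count j) (by rw [Stmt10Aux.sum_count]; exact hl) p hp
    rwa [Stmt10Aux.sum_count] at hb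
  obtain ⟨h1, h2⟩ := stmt10_aux G hG Z hZ A hA r X hsmooth hbound' hzero
  refine ⟨?_, h2⟩
  intro α hα p hp
  rw [Stmt10Aux.mpdP_eq_pdList]
  exact h1 (Stmt10Aux.Lst α) (by rw [Stmt10Aux.length_Lst]; exact hα) p hp
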